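/- Stein's characterization of the normal distribution: a real random variable Y satisfies E[F(Y)Y] = σ² E[F'(Y)] for all C¹ functions F with bounded F and F' if and only if Y is Gaussian with mean 0 and variance σ². -/

import Mathlib

open MeasureTheory ProbabilityTheory Real Set Filter Topology
open scoped NNReal ENNReal

namespace SteinAux

variable {v : ℝ}

/-- the unnormalized gaussian kernel -/
noncomputable def gexp (v y : ℝ) : ℝ := rexp (-y^2 / (2*v))

lemma gexp_pos (v y : ℝ) : 0 < gexp v y := exp_pos _

lemma cont_gexp : Continuous (gexp v) := (((continuous_pow 2).neg.div_const _)).rexp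

lemma gexp_even (v y : ℝ) : gexp v (-y) = gexp v y := by simp [gexp]

lemma integrable_gexp (hv : 0 < v) : Integrable (gexp v) := by
  have h := integrable_exp_neg_mul_sq (b := (2*v)⁻¹) (by positivity)
  unfold gexp
  convert h using 2 with y
  rw [neg_div, div_eq_inv_mul, neg_mul]

lemma integrable_gexp_mul (hv : 0 < v) {g : ℝ → ℝ} (hg : Continuous g) {M : ℝ}
    (hM : ∀ x, |g x| ≤ M) :
    Integrable (fun y : ℝ => gexp v y * g y) := by
  refine Integrable.mono' ((integrable_gexp hv).mul_const M)
    ((cont_gexp.mul hg).aestronglyMeasurable) (.of_forall fun y => ?_)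
  rw [norm_mul, Real.norm_eq_abs, Real.norm_eq_abs, abs_of_pos (gexp_pos v y)]
  exact mul_le_mul_of_nonneg_left (hM y) (gexp_pos v y).le

lemma integrable_mul_gexp (hv : 0 < v) : Integrable (fun y : ℝ => y * gexp v y) := by
  have h := integrable_mul_exp_neg_mul_sq (b := (2*v)⁻¹) (by positivity)
  unfold gexp
  convert h using 2 with y
  rw [neg_div, div_eq_inv_mul, neg_mul]

lemma integral_exp_mul_Iic {a : ℝ} (ha : 0 < a) (w : ℝ) :
    ∫ y in Iic w, rexp (a * y) = rexp (a * w) / a := by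
  have h1 : (∫ x in Ioi (-w), rexp (-(a * x))) = ∫ y in Iic w, rexp (a * y) := by
    rw [← integral_comp_neg_Iic]
    norm_num
  rw [← h1]
  have h2 := integral_comp_mul_left_Ioi (fun t => rexp (-t)) (-w) ha
  rw [h2, integral_exp_neg_Ioi, smul_eq_mul, mul_neg, neg_neg, div_eq_inv_mul]

lemma integrableOn_exp_mul_Iic {a : ℝ} (ha : 0 < a) (w : ℝ) :
    IntegrableOn (fun y => rexp (a * y)) (Iic w) := by
  have h : IntegrableOn (fun x : ℝ => rexp (-(a * x))) (Ioi (-w)) := by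
    have h0 := exp_neg_integrableOn_Ioi (-w) ha
    exact h0.congr_fun (fun x _ => by simp only [neg_mul]) measurableSet_Ioi
  have h2 := ((integrable_indicator_iff measurableSet_Ioi).2 h).comp_neg
  have h3 : (fun y : ℝ => (Ioi (-w)).indicator (fun x => rexp (-(a * x))) (-y))
      = (Iio w).indicator (fun y => rexp (a * y)) := by
    funext y
    by_cases hy : y < w
    · simp only [Set.indicator_apply, mem_Ioi, mem_Iio, if_pos hy,
        if_pos (show -w < -y from neg_lt_neg hy), neg_neg, mul_neg, neg_neg]
    · simp only [Set.indicator_apply, mem_Ioi, mem_Iio, if_neg hy,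
        if_neg (show ¬ -w < -y from fun c => hy (by linarith))]
  rw [h3] at h2
  exact ((integrable_indicator_iff measurableSet_Iio).1 h2).congr_set_ae Iio_ae_eq_Iic.symm

/-- translation for set integrals over `Iic` -/
lemma setIntegral_Iic_comp_sub (q : ℝ → ℝ) (w : ℝ) :
    ∫ y in Iic w, q (y - w) = ∫ y in Iic 0, q y := by
  rw [← integral_indicator measurableSet_Iic, ← integral_indicator measurableSet_Iic,
    ← integral_sub_right_eq_self (fun y => (Iic (0:ℝ)).indicator q y) w]
  congr 1
  funext y
  by_cases h : y ≤ w
  · simp only [Set.indicator_apply, mem_Iic, if_pos h, if_pos (show y - w ≤ 0 by linarith)]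
  · simp only [Set.indicator_apply, mem_Iic, if_neg h,
      if_neg (show ¬ y - w ≤ 0 by intro c; exact h (by linarith))]

lemma integrableOn_gexp_sub (hv : 0 < v) (w : ℝ) :
    IntegrableOn (fun y => gexp v (y - w)) (Iic w) := by
  have h := ((integrable_gexp hv).comp_add_right (-w))
  have h2 : (fun y => gexp v (y + -w)) = fun y => gexp v (y - w) := by
    funext y; rw [← sub_eq_add_neg]
  rw [h2] at h
  exact h.integrableOn


lemma gexp_mul_gexp (hv : 0 < v) (w y : ℝ) :
    rexp (w^2 / (2*v)) * gexp v y = rexp ((w^2 - y^2) / (2*v)) := by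
  rw [gexp, ← exp_add]
  congr 1
  field_simp
  ring

/-- Key tail bound 1: for `w ≤ 0`. -/
lemma tail_bound_one (hv : 0 < v) {w : ℝ} (hw : w ≤ 0) :
    rexp (w^2 / (2*v)) * ∫ y in Iic w, gexp v y ≤ ∫ y in Iic 0, gexp v y := by
  rw [← integral_const_mul]
  have h1 : ∀ y ∈ Iic w, rexp (w^2 / (2*v)) * gexp v y ≤ gexp v (y - w) := by
    intro y hy
    rw [gexp_mul_gexp hv, gexp]
    apply exp_le_exp.2
    exact (div_le_div_iff_of_pos_right (show (0:ℝ) < 2*v by positivity)).2 (by nlinarith [mem_Iic.1 hy])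
  calc (∫ y in Iic w, rexp (w^2 / (2*v)) * gexp v y)
      ≤ ∫ y in Iic w, gexp v (y - w) := by
        refine setIntegral_mono_on ?_ (integrableOn_gexp_sub hv w) measurableSet_Iic h1
        exact (((integrable_gexp hv).const_mul _)).integrableOn
    _ = ∫ y in Iic 0, gexp v y := setIntegral_Iic_comp_sub (gexp v) w

/-- Key tail bound 2: for `w < 0`. -/
lemma tail_bound_two (hv : 0 < v) {w : ℝ} (hw : w < 0) :
    rexp (w^2 / (2*v)) * ∫ y in Iic w, gexp v y ≤ v / (-w) := by
  rw [← integral_const_mul]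
  have ha : 0 < -w / v := div_pos (neg_pos.2 hw) hv
  have h1 : ∀ y ∈ Iic w, rexp (w^2 / (2*v)) * gexp v y
      ≤ rexp (w^2/v) * rexp ((-w/v) * y) := by
    intro y hy
    rw [gexp_mul_gexp hv, ← exp_add]
    apply exp_le_exp.2
    rw [div_le_iff₀ (show (0:ℝ) < 2*v by positivity)]
    have he : (w^2/v + -w/v*y)*(2*v) = 2*w^2 - 2*w*y := by field_simp; ring
    rw [he]
    nlinarith [sq_nonneg (w - y)]
  calc (∫ y in Iic w, rexp (w^2 / (2*v)) * gexp v y)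
      ≤ ∫ y in Iic w, rexp (w^2/v) * rexp ((-w/v) * y) := by
        refine setIntegral_mono_on ?_ ?_ measurableSet_Iic h1
        · exact (((integrable_gexp hv).const_mul _)).integrableOn
        · exact ((integrableOn_exp_mul_Iic ha w).const_mul _)
    _ = rexp (w^2/v) * (rexp ((-w/v) * w) / (-w/v)) := by
        rw [integral_const_mul, integral_exp_mul_Iic ha w]
    _ = v / (-w) := by
        rw [show rexp (w^2/v) * (rexp (-w/v*w) / (-w/v))
            = (rexp (w^2/v) * rexp (-w/v*w)) / (-w/v) by ring, ← exp_add,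
          show w^2/v + -w/v*w = 0 by field_simp; ring, exp_zero, one_div_div]


lemma stein_solution (hv : 0 < v) {g : ℝ → ℝ} (hg : Continuous g) {M : ℝ}
    (hM : ∀ x, |g x| ≤ M)
    (hT : (∫ y, gexp v y * g y) = 0) :
    ∃ f : ℝ → ℝ, ContDiff ℝ 1 f ∧ (∃ C, ∀ x, |f x| ≤ C) ∧ (∃ C, ∀ x, |deriv f x| ≤ C) ∧
      ∀ w, v * deriv f w = w * f w + g w := by
  have hM0 : 0 ≤ M := le_trans (abs_nonneg _) (hM 0)
  set ρ : ℝ → ℝ := fun y => gexp v y * g y with hρ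
  have hρc : Continuous ρ := cont_gexp.mul hg
  have hρi : Integrable ρ := integrable_gexp_mul hv hg hM
  set J : ℝ → ℝ := fun w => ∫ y in Iic w, ρ y with hJ
  set A : ℝ → ℝ := fun w => rexp (w^2/(2*v)) with hA
  set f : ℝ → ℝ := fun w => v⁻¹ * (A w * J w) with hf
  set K0 : ℝ := ∫ y in Iic 0, gexp v y with hK0
  have hK0nn : 0 ≤ K0 := setIntegral_nonneg measurableSet_Iic fun y _ => (gexp_pos v y).le
  -- derivative of J
  have hJd : ∀ w, HasDerivAt J (ρ w) w := by
    intro w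
    have h1 : ∀ u, J u = (∫ y in (0:ℝ)..u, ρ y) + J 0 := by
      intro u
      rw [hJ]
      simp only
      rw [← intervalIntegral.integral_Iic_sub_Iic (hρi.integrableOn) (hρi.integrableOn)]
      ring
    have h2 : HasDerivAt (fun u => (∫ y in (0:ℝ)..u, ρ y) + J 0) (ρ w) w := by
      apply HasDerivAt.add_const
      exact intervalIntegral.integral_hasDerivAt_right (hρi.intervalIntegrable)
        (hρc.stronglyMeasurableAtFilter _ _) hρc.continuousAt
    exact h2.congr_of_eventuallyEq (Filter.Eventually.of_forall h1)
  have hAd : ∀ w, HasDerivAt A (w/v * A w) w := by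
    intro w
    have h1 : HasDerivAt (fun u : ℝ => u^2/(2*v)) (w/v) w := by
      have h2 := (hasDerivAt_pow 2 w).div_const (2*v)
      refine h2.congr_deriv ?_
      field_simp
      ring
    have := h1.exp
    simpa [hA, mul_comm] using this
  have hfd : ∀ w, HasDerivAt f (v⁻¹ * (w * f w + g w)) w := by
    intro w
    have h1 := ((hAd w).mul (hJd w)).const_mul v⁻¹
    have hAρ : A w * ρ w = g w := by
      rw [hρ, hA]
      simp only
      rw [← mul_assoc, gexp_mul_gexp hv, sub_self, zero_div, exp_zero, one_mul]
    refine h1.congr_deriv ?_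
    rw [hAρ, hf]
    simp only
    ring
  have hfc : Continuous f := by
    have : Differentiable ℝ f := fun x => (hfd x).differentiableAt
    exact this.continuous
  have hderiv_eq : deriv f = fun w => v⁻¹ * (w * f w + g w) := by
    funext w
    exact (hfd w).deriv
  -- core estimates
  have hJ_le : ∀ w, |J w| ≤ M * ∫ y in Iic w, gexp v y := by
    intro w
    rw [hJ]
    simp only
    calc |∫ y in Iic w, ρ y| ≤ ∫ y in Iic w, |ρ y| := by
          simpa [Real.norm_eq_abs] using
            norm_integral_le_integral_norm (μ := volume.restrict _) ρ
      _ ≤ ∫ y in Iic w, M * gexp v y := by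
          refine setIntegral_mono_on (hρi.abs.integrableOn)
            (((integrable_gexp hv).const_mul M).integrableOn) measurableSet_Iic fun y _ => ?_
          rw [hρ, abs_mul, abs_of_pos (gexp_pos v y)]
          exact mul_le_mul_of_nonneg_left (hM y) (gexp_pos v y).le |>.trans
            (le_of_eq (mul_comm _ _))
      _ = M * ∫ y in Iic w, gexp v y := integral_const_mul M _
  have hJ_le' : ∀ w, 0 < w → |J w| ≤ M * ∫ y in Iic (-w), gexp v y := by
    intro w hw
    have hsplit : J w + ∫ y in Ioi w, ρ y = 0 := by
      rw [hJ]
      simp only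
      rw [intervalIntegral.integral_Iic_add_Ioi (hρi.integrableOn) (hρi.integrableOn), hT]
    have hJw : J w = -∫ y in Ioi w, ρ y := by linarith
    have hmirror : (∫ y in Ioi w, gexp v y) = ∫ y in Iic (-w), gexp v y := by
      have h := integral_comp_neg_Iic (-w) (gexp v)
      simp only [gexp_even, neg_neg] at h
      exact h.symm
    rw [hJw, abs_neg]
    calc |∫ y in Ioi w, ρ y| ≤ ∫ y in Ioi w, |ρ y| := by
          simpa [Real.norm_eq_abs] using
            norm_integral_le_integral_norm (μ := volume.restrict _) ρ
      _ ≤ ∫ y in Ioi w, M * gexp v y := by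
          refine setIntegral_mono_on (hρi.abs.integrableOn)
            (((integrable_gexp hv).const_mul M).integrableOn) measurableSet_Ioi fun y _ => ?_
          rw [hρ, abs_mul, abs_of_pos (gexp_pos v y)]
          exact mul_le_mul_of_nonneg_left (hM y) (gexp_pos v y).le |>.trans
            (le_of_eq (mul_comm _ _))
      _ = M * ∫ y in Ioi w, gexp v y := integral_const_mul M _
      _ = M * ∫ y in Iic (-w), gexp v y := by rw [hmirror]
  have hA_pos : ∀ w, 0 < A w := fun w => exp_pos _
  have hA_neg : ∀ w, A (-w) = A w := by intro w; rw [hA]; simp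
  -- main estimate, first component
  have est1 : ∀ w, |A w * J w| ≤ M * K0 := by
    intro w
    rcases le_or_gt w 0 with hw | hw
    · rw [abs_mul, abs_of_pos (hA_pos w)]
      calc A w * |J w| ≤ A w * (M * ∫ y in Iic w, gexp v y) :=
            mul_le_mul_of_nonneg_left (hJ_le w) (hA_pos w).le
        _ = M * (A w * ∫ y in Iic w, gexp v y) := by ring
        _ ≤ M * K0 := mul_le_mul_of_nonneg_left (tail_bound_one hv hw) hM0
    · rw [abs_mul, abs_of_pos (hA_pos w)]
      calc A w * |J w| ≤ A w * (M * ∫ y in Iic (-w), gexp v y) :=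
            mul_le_mul_of_nonneg_left (hJ_le' w hw) (hA_pos w).le
        _ = M * (A (-w) * ∫ y in Iic (-w), gexp v y) := by rw [hA_neg]; ring
        _ ≤ M * K0 := mul_le_mul_of_nonneg_left
            (tail_bound_one hv (by linarith : -w ≤ 0)) hM0
  -- second component
  have est2 : ∀ w, |w| * |A w * J w| ≤ M * v := by
    intro w
    rcases lt_trichotomy w 0 with hw | hw | hw
    · rw [abs_mul, abs_of_pos (hA_pos w)]
      calc |w| * (A w * |J w|) ≤ |w| * (A w * (M * ∫ y in Iic w, gexp v y)) := by
            refine mul_le_mul_of_nonneg_left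
              (mul_le_mul_of_nonneg_left (hJ_le w) (hA_pos w).le) (abs_nonneg w)
        _ = M * (|w| * (A w * ∫ y in Iic w, gexp v y)) := by ring
        _ ≤ M * (|w| * (v / (-w))) := by
            refine mul_le_mul_of_nonneg_left
              (mul_le_mul_of_nonneg_left (tail_bound_two hv hw) (abs_nonneg w)) hM0
        _ = M * v := by
            have hw0 : w ≠ 0 := ne_of_lt hw
            rw [abs_of_neg hw]
            field_simp
    · simp [hw, hM0, hv.le, mul_nonneg hM0 hv.le]
    · rw [abs_mul, abs_of_pos (hA_pos w)]
      calc |w| * (A w * |J w|) ≤ |w| * (A w * (M * ∫ y in Iic (-w), gexp v y)) := by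
            refine mul_le_mul_of_nonneg_left
              (mul_le_mul_of_nonneg_left (hJ_le' w hw) (hA_pos w).le) (abs_nonneg w)
        _ = M * (|-w| * (A (-w) * ∫ y in Iic (-w), gexp v y)) := by
            rw [hA_neg, abs_neg]; ring
        _ ≤ M * (|-w| * (v / (-(-w)))) := by
            refine mul_le_mul_of_nonneg_left
              (mul_le_mul_of_nonneg_left (tail_bound_two hv (by linarith : -w < 0))
                (abs_nonneg _)) hM0
        _ = M * v := by
            have hw0 : w ≠ 0 := ne_of_gt hw
            simp only [neg_neg, abs_neg, abs_of_pos hw]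
            field_simp
  refine ⟨f, ?_, ?_, ?_, ?_⟩
  · refine contDiff_one_iff_deriv.2 ⟨fun x => (hfd x).differentiableAt, ?_⟩
    rw [hderiv_eq]
    exact continuous_const.mul ((continuous_id.mul hfc).add hg)
  · refine ⟨v⁻¹ * (M * K0), fun x => ?_⟩
    rw [hf]
    simp only
    rw [abs_mul, abs_of_pos (by positivity : (0:ℝ) < v⁻¹)]
    exact mul_le_mul_of_nonneg_left (est1 x) (by positivity)
  · refine ⟨v⁻¹ * (M + M), fun x => ?_⟩
    rw [hderiv_eq]
    simp only
    rw [abs_mul, abs_of_pos (by positivity : (0:ℝ) < v⁻¹)]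
    refine mul_le_mul_of_nonneg_left ((abs_add_le _ _).trans (add_le_add ?_ (hM x)))
      (by positivity)
    have : |x * f x| = |x| * (v⁻¹ * |A x * J x|) := by
      rw [hf]
      simp only
      rw [abs_mul, abs_mul, abs_of_pos (by positivity : (0:ℝ) < v⁻¹)]
    rw [this]
    calc |x| * (v⁻¹ * |A x * J x|) = v⁻¹ * (|x| * |A x * J x|) := by ring
      _ ≤ v⁻¹ * (M * v) := mul_le_mul_of_nonneg_left (est2 x) (by positivity)
      _ = M := by field_simp
  · intro w
    rw [hderiv_eq]
    simp only
    rw [← mul_assoc, mul_inv_cancel₀ (ne_of_gt hv), one_mul]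

lemma integral_gaussianReal_eq {v : ℝ≥0} (hv : v ≠ 0) (f : ℝ → ℝ) :
    ∫ x, f x ∂(gaussianReal 0 v) = ∫ x, gaussianPDFReal 0 v x * f x := by
  rw [gaussianReal_of_var_ne_zero 0 hv]
  have hd : Measurable fun x => Real.toNNReal (gaussianPDFReal 0 v x) :=
    (measurable_gaussianPDFReal 0 v).real_toNNReal
  rw [show gaussianPDF 0 v = fun x => ((Real.toNNReal (gaussianPDFReal 0 v x) : ℝ≥0) : ℝ≥0∞)
      from rfl]
  rw [integral_withDensity_eq_integral_smul hd f]
  congr 1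
  funext x
  rw [NNReal.smul_def, smul_eq_mul, Real.coe_toNNReal _ (gaussianPDFReal_nonneg 0 v x)]

lemma gaussianPDFReal_zero_eq (v : ℝ≥0) (x : ℝ) :
    gaussianPDFReal 0 v x = (Real.sqrt (2*π*v))⁻¹ * gexp (v:ℝ) x := by
  rw [gaussianPDFReal, gexp, sub_zero]

lemma integral_gexp_eq (hv : 0 < v) : (∫ y, gexp v y) = Real.sqrt (2*π*v) := by
  have h := integral_gaussian ((2*v)⁻¹)
  have h2 : (fun y : ℝ => gexp v y) = fun y : ℝ => rexp (-(2*v)⁻¹ * y^2) := by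
    funext y
    rw [gexp, neg_div, div_eq_inv_mul, neg_mul]
  rw [h2, h]
  congr 1
  rw [div_eq_mul_inv, inv_inv]
  ring

lemma hasDerivAt_gexp (hv : 0 < v) (x : ℝ) :
    HasDerivAt (gexp v) (-(x/v) * gexp v x) x := by
  have h1 : HasDerivAt (fun u : ℝ => -u^2/(2*v)) (-(x/v)) x := by
    have h2 := ((hasDerivAt_pow 2 x).neg.div_const (2*v))
    refine h2.congr_deriv ?_
    field_simp
    ring
  rw [show gexp v = fun y => rexp (-y^2/(2*v)) from rfl]
  simpa [mul_comm] using h1.exp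

lemma tendsto_gexp_atTop (hv : 0 < v) : Tendsto (gexp v) atTop (𝓝 0) := by
  have h1 : Tendsto (fun x : ℝ => x^2/(2*v)) atTop atTop :=
    (tendsto_pow_atTop two_ne_zero).atTop_div_const (by positivity)
  have h2 := tendsto_exp_neg_atTop_nhds_zero.comp h1
  refine h2.congr fun x => ?_
  rw [Function.comp_apply, gexp, neg_div]

lemma tendsto_gexp_atBot (hv : 0 < v) : Tendsto (gexp v) atBot (𝓝 0) := by
  have h2 := (tendsto_gexp_atTop hv).comp tendsto_neg_atBot_atTop
  refine h2.congr fun x => ?_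
  rw [Function.comp_apply, gexp_even]

lemma backward_ibp (hv : 0 < v) {F : ℝ → ℝ} (hF : ContDiff ℝ 1 F) {M1 : ℝ}
    (hM1 : ∀ x, |F x| ≤ M1) {M2 : ℝ} (hM2 : ∀ x, |deriv F x| ≤ M2) :
    ∫ x, F x * x * gexp v x = v * ∫ x, deriv F x * gexp v x := by
  have hM1nn : 0 ≤ M1 := le_trans (abs_nonneg _) (hM1 0)
  have hFc : Continuous F := hF.continuous
  have hdFc : Continuous (deriv F) := hF.continuous_deriv le_rfl
  set G : ℝ → ℝ := fun x => F x * gexp v x with hG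
  set G' : ℝ → ℝ := fun x => deriv F x * gexp v x - x/v * (F x * gexp v x) with hG'
  have hGd : ∀ x, HasDerivAt G (G' x) x := by
    intro x
    have h1 := ((hF.differentiable one_ne_zero x).hasDerivAt).mul (hasDerivAt_gexp hv x)
    refine h1.congr_deriv ?_
    rw [hG']
    ring
  have hI1 : Integrable (fun x => deriv F x * gexp v x) := by
    have := integrable_gexp_mul hv hdFc hM2
    exact this.congr (Filter.Eventually.of_forall fun x => mul_comm _ _)
  have hI2 : Integrable (fun x => x/v * (F x * gexp v x)) := by
    refine Integrable.mono' (((integrable_mul_gexp hv).abs.const_mul (M1/v)))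
      (((continuous_id.div_const v).mul (hFc.mul cont_gexp)).aestronglyMeasurable)
      (.of_forall fun x => ?_)
    rw [Real.norm_eq_abs, abs_mul, abs_mul, abs_div, abs_of_pos hv, abs_mul,
      abs_of_pos (gexp_pos v x)]
    calc |x|/v * (|F x| * gexp v x) ≤ |x|/v * (M1 * gexp v x) := by
          refine mul_le_mul_of_nonneg_left
            (mul_le_mul_of_nonneg_right (hM1 x) (gexp_pos v x).le) (by positivity)
      _ = M1/v * (|x| * gexp v x) := by ring
  have hG'i : Integrable G' := hI1.sub hI2
  have hbd : ∀ x, ‖G x‖ ≤ M1 * gexp v x := by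
    intro x
    rw [hG]
    simp only [Real.norm_eq_abs, abs_mul, abs_of_pos (gexp_pos v x)]
    exact mul_le_mul_of_nonneg_right (hM1 x) (gexp_pos v x).le
  have hGtop : Tendsto G atTop (𝓝 0) := by
    have h2 := (tendsto_gexp_atTop hv).const_mul M1
    rw [mul_zero] at h2
    exact squeeze_zero_norm hbd h2
  have hGbot : Tendsto G atBot (𝓝 0) := by
    have h2 := (tendsto_gexp_atBot hv).const_mul M1
    rw [mul_zero] at h2
    exact squeeze_zero_norm hbd h2
  have hIic : ∫ x in Iic 0, G' x = G 0 - 0 := by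
    refine integral_Iic_of_hasDerivAt_of_tendsto ((hGd 0).continuousAt.continuousWithinAt)
      (fun x _ => hGd x) (hG'i.integrableOn) hGbot
  have hIoi : ∫ x in Ioi 0, G' x = 0 - G 0 := by
    refine integral_Ioi_of_hasDerivAt_of_tendsto ((hGd 0).continuousAt.continuousWithinAt)
      (fun x _ => hGd x) (hG'i.integrableOn) hGtop
  have htotal : ∫ x, G' x = 0 := by
    rw [← intervalIntegral.integral_Iic_add_Ioi (hG'i.integrableOn) (hG'i.integrableOn),
      hIic, hIoi]
    ring
  have hsub : (∫ x, deriv F x * gexp v x) - ∫ x, x/v * (F x * gexp v x) = 0 := by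
    rw [← integral_sub hI1 hI2]
    exact htotal
  have h2 : (∫ x, x/v * (F x * gexp v x)) = v⁻¹ * ∫ x, F x * x * gexp v x := by
    rw [← integral_const_mul]
    congr 1
    funext x
    ring
  rw [h2] at hsub
  have : (∫ x, deriv F x * gexp v x) = v⁻¹ * ∫ x, F x * x * gexp v x := by linarith
  rw [this]
  field_simp

/-- integrability of bounded continuous compositions -/
lemma integrable_bdd {α : Type*} [MeasurableSpace α] {ν : Measure α} [IsFiniteMeasure ν]
    {q : α → ℝ} (hq : Measurable q) {C : ℝ} (hC : ∀ x, |q x| ≤ C) : Integrable q ν := by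
  refine Integrable.mono' (integrable_const C) hq.aestronglyMeasurable
    (Filter.Eventually.of_forall fun x => ?_)
  rw [Real.norm_eq_abs]
  exact hC x

lemma backward_key {σ : ℝ} (hσ : 0 < σ) (F : ℝ → ℝ) (hF : ContDiff ℝ 1 F) {M1 : ℝ}
    (hM1 : ∀ x, |F x| ≤ M1) {M2 : ℝ} (hM2 : ∀ x, |deriv F x| ≤ M2) :
    ∫ x, F x * x ∂(gaussianReal 0 ⟨σ^2, sq_nonneg σ⟩)
      = σ^2 * ∫ x, deriv F x ∂(gaussianReal 0 ⟨σ^2, sq_nonneg σ⟩) := by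
  have hv : (0:ℝ) < σ^2 := by positivity
  have hvnn : (⟨σ^2, sq_nonneg σ⟩ : ℝ≥0) ≠ 0 := by
    intro hcon
    replace hcon := congrArg Subtype.val hcon
    exact (ne_of_gt hv) hcon
  rw [integral_gaussianReal_eq hvnn, integral_gaussianReal_eq hvnn]
  have hcoe : ((⟨σ^2, sq_nonneg σ⟩ : ℝ≥0) : ℝ) = σ^2 := rfl
  simp only [gaussianPDFReal_zero_eq ⟨σ^2, sq_nonneg σ⟩, hcoe]
  set c0 : ℝ := (Real.sqrt (2*π*σ^2))⁻¹ with hc0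
  have key := backward_ibp hv hF hM1 hM2
  calc (∫ x, c0 * gexp (σ^2) x * (F x * x))
      = c0 * ∫ x, F x * x * gexp (σ^2) x := by
        rw [← integral_const_mul]
        congr 1
        funext x
        ring
    _ = c0 * (σ^2 * ∫ x, deriv F x * gexp (σ^2) x) := by rw [key]
    _ = σ^2 * ∫ x, c0 * gexp (σ^2) x * deriv F x := by
        rw [show (fun x : ℝ => c0 * gexp (σ^2) x * deriv F x)
            = fun x => c0 * (deriv F x * gexp (σ^2) x) from funext fun x => by ring,
          integral_const_mul]
        ring

lemma forward_key {Ω : Type*} [MeasurableSpace Ω] (μ : Measure Ω) [IsProbabilityMeasure μ]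
    (Y : Ω → ℝ) (hY : Measurable Y) {σ : ℝ} (hσ : 0 < σ)
    (hStein : ∀ F : ℝ → ℝ, ContDiff ℝ 1 F → (∃ M : ℝ, ∀ x, |F x| ≤ M) →
        (∃ M : ℝ, ∀ x, |deriv F x| ≤ M) →
        ∫ ω, F (Y ω) * Y ω ∂μ = σ ^ 2 * ∫ ω, deriv F (Y ω) ∂μ)
    (h : ℝ → ℝ) (hh : Continuous h) {Mh : ℝ} (hMh : ∀ x, |h x| ≤ Mh) :
    ∫ ω, h (Y ω) ∂μ = ∫ x, h x ∂(gaussianReal 0 ⟨σ^2, sq_nonneg σ⟩) := by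
  have hv : (0:ℝ) < σ^2 := by positivity
  have hvnn : (⟨σ^2, sq_nonneg σ⟩ : ℝ≥0) ≠ 0 := by
    intro hcon
    replace hcon := congrArg Subtype.val hcon
    exact (ne_of_gt hv) hcon
  set c : ℝ := ∫ x, h x ∂(gaussianReal 0 ⟨σ^2, sq_nonneg σ⟩) with hc
  set g : ℝ → ℝ := fun x => h x - c with hgdef
  have hg : Continuous g := hh.sub continuous_const
  have hgM : ∀ x, |g x| ≤ Mh + |c| := by
    intro x
    rw [hgdef]
    exact (abs_sub _ _).trans (add_le_add (hMh x) le_rfl)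
  have hsqrt_pos : 0 < Real.sqrt (2*π*σ^2) := by
    apply Real.sqrt_pos.2
    positivity
  have hT : (∫ y, gexp (σ^2) y * g y) = 0 := by
    have h1 : (∫ y, gexp (σ^2) y * h y) = c * Real.sqrt (2*π*σ^2) := by
      have h2 : c = ∫ x, gaussianPDFReal 0 ⟨σ^2, sq_nonneg σ⟩ x * h x :=
        integral_gaussianReal_eq hvnn h
      have hcoe : ((⟨σ^2, sq_nonneg σ⟩ : ℝ≥0) : ℝ) = σ^2 := rfl
      simp only [gaussianPDFReal_zero_eq ⟨σ^2, sq_nonneg σ⟩, NNReal.coe_mk, hcoe] at h2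
      change c = ∫ x, (Real.sqrt (2*π*σ^2))⁻¹ * gexp (σ^2) x * h x at h2
      rw [show (fun x => (Real.sqrt (2*π*σ^2))⁻¹ * gexp (σ^2) x * h x)
          = fun x => (Real.sqrt (2*π*σ^2))⁻¹ * (gexp (σ^2) x * h x)
          from funext fun x => by ring, integral_const_mul] at h2
      rw [h2]
      field_simp
    have h3 : (∫ y, gexp (σ^2) y * g y)
        = (∫ y, gexp (σ^2) y * h y) - c * ∫ y, gexp (σ^2) y := by
      rw [← integral_const_mul, ← integral_sub (integrable_gexp_mul hv hh hMh)
        (((integrable_gexp hv)).const_mul c |>.congr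
          (Filter.Eventually.of_forall fun y => rfl))]
      congr 1
      funext y
      rw [hgdef]
      ring
    rw [h3, h1, integral_gexp_eq hv]
    ring
  obtain ⟨f, hf1, hf2, hf3, hrel⟩ := stein_solution hv hg hgM hT
  have happ := hStein f hf1 hf2 hf3
  have hdFc : Continuous (deriv f) := hf1.continuous_deriv le_rfl
  obtain ⟨C2, hC2⟩ := hf3
  have hIdf : Integrable (fun ω => deriv f (Y ω)) μ :=
    integrable_bdd ((hdFc.measurable).comp hY) (fun ω => hC2 (Y ω))
  have hIg : Integrable (fun ω => g (Y ω)) μ :=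
    integrable_bdd ((hg.measurable).comp hY) (fun ω => hgM (Y ω))
  have hpt : (fun ω => f (Y ω) * Y ω) = fun ω => σ^2 * deriv f (Y ω) - g (Y ω) := by
    funext ω
    have := hrel (Y ω)
    rw [mul_comm]
    linarith
  rw [hpt] at happ
  rw [integral_sub (hIdf.const_mul _) hIg, integral_const_mul] at happ
  have hg0 : (∫ ω, g (Y ω) ∂μ) = 0 := by linarith
  have hsplit : (∫ ω, g (Y ω) ∂μ) = (∫ ω, h (Y ω) ∂μ) - c := by
    have hIh : Integrable (fun ω => h (Y ω)) μ :=
      integrable_bdd ((hh.measurable).comp hY) (fun ω => hMh (Y ω))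
    rw [hgdef]
    rw [integral_sub hIh (integrable_const c), integral_const]
    simp
  rw [hsplit] at hg0
  linarith

end SteinAux

open SteinAux in
/-- Stein's characterization of the normal distribution: `Y` satisfies
`E[F(Y) Y] = σ² E[F'(Y)]` for all `C¹` functions `F` with `F` and `F'` bounded
iff `Y` is Gaussian with mean `0` and variance `σ²`. -/
theorem stein_characterization
    {Ω : Type*} [MeasurableSpace Ω] (μ : Measure Ω) [IsProbabilityMeasure μ]
    (Y : Ω → ℝ) (hY : Measurable Y) (σ : ℝ) (hσ : 0 < σ) :
    (∀ F : ℝ → ℝ, ContDiff ℝ 1 F → (∃ M : ℝ, ∀ x, |F x| ≤ M) →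
        (∃ M : ℝ, ∀ x, |deriv F x| ≤ M) →
        ∫ ω, F (Y ω) * Y ω ∂μ = σ ^ 2 * ∫ ω, deriv F (Y ω) ∂μ) ↔
      μ.map Y = gaussianReal 0 ⟨σ ^ 2, sq_nonneg σ⟩ := by
  constructor
  · intro hStein
    haveI hPM : IsProbabilityMeasure (μ.map Y) := Measure.isProbabilityMeasure_map hY.aemeasurable
    refine ext_of_forall_lintegral_eq_of_IsFiniteMeasure fun f => ?_
    set h : ℝ → ℝ := fun x => ((f x : ℝ≥0) : ℝ) with hhdef
    have hh : Continuous h := NNReal.continuous_coe.comp f.continuous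
    obtain ⟨C, hC⟩ := f.bounded
    have hMh : ∀ x, |h x| ≤ C + h 0 := by
      intro x
      rw [abs_of_nonneg (by positivity : (0:ℝ) ≤ h x)]
      have h1 := hC x 0
      rw [NNReal.dist_eq] at h1
      have h2 : h x - h 0 ≤ C := (le_abs_self _).trans h1
      linarith
    have key : ∫ ω, h (Y ω) ∂μ = ∫ x, h x ∂(gaussianReal 0 ⟨σ^2, sq_nonneg σ⟩) :=
      forward_key μ Y hY hσ hStein h hh hMh
    have keymap : ∫ x, h x ∂(μ.map Y) = ∫ x, h x ∂(gaussianReal 0 ⟨σ^2, sq_nonneg σ⟩) := by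
      rw [integral_map hY.aemeasurable hh.aestronglyMeasurable]
      exact key
    have hint1 : Integrable h (μ.map Y) := integrable_bdd hh.measurable hMh
    have hint2 : Integrable h (gaussianReal 0 ⟨σ^2, sq_nonneg σ⟩) :=
      by haveI := instIsProbabilityMeasureGaussianReal 0 ⟨σ^2, sq_nonneg σ⟩; exact integrable_bdd hh.measurable hMh
    rw [lintegral_coe_eq_integral _ hint1, lintegral_coe_eq_integral _ hint2, keymap]
  · intro hmap F hF hb1 hb2
    obtain ⟨M1, hM1⟩ := hb1
    obtain ⟨M2, hM2⟩ := hb2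
    have h1 : ∫ ω, F (Y ω) * Y ω ∂μ = ∫ x, F x * x ∂(μ.map Y) :=
      (integral_map hY.aemeasurable
        ((hF.continuous.mul continuous_id).aestronglyMeasurable)).symm
    have h2 : ∫ ω, deriv F (Y ω) ∂μ = ∫ x, deriv F x ∂(μ.map Y) :=
      (integral_map hY.aemeasurable
        ((hF.continuous_deriv le_rfl).aestronglyMeasurable)).symm
    rw [h1, h2, hmap]
    exact backward_key hσ F hF hM1 hM2
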